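/- Let S and A be finite nonempty sets, r : S × A → ℝ, and p a transition kernel assigning to each (s,a) a probability vector p(·|s,a) on S. Suppose J* ∈ ℝ and q* : S × A → ℝ satisfy J* + q*(s,a) = r(s,a) + Σ_{s'} p(s'|s,a) v*(s') for all (s,a), where v*(s) := max_{a∈A} q*(s,a). Let 0 ≤ γ < 1 and suppose Q* : S × A → ℝ and V* : S → ℝ satisfy Q*(s,a) = r(s,a) + γ Σ_{s'} p(s'|s,a) V*(s') and V*(s) = max_{a∈A} Q*(s,a). Then span(V*) ≤ 2 · span(v*), where span(f) := max_s f(s) − min_s f(s). -/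

import Mathlib

open Finset

/-- The span of the discounted optimal value function is at most twice the span
of the average-reward optimal value function. -/
theorem discounted_span_bound
    {S A : Type*} [Fintype S] [Fintype A] [Nonempty S] [Nonempty A]
    (r : S → A → ℝ) (p : S → A → S → ℝ)
    (hp0 : ∀ s a s', 0 ≤ p s a s') (hp1 : ∀ s a, ∑ s', p s a s' = 1)
    (γ : ℝ) (hγ0 : 0 ≤ γ) (hγ1 : γ < 1)
    (Jstar : ℝ) (qstar : S → A → ℝ) (vstar : S → ℝ)
    (hv : ∀ s, vstar s = univ.sup' univ_nonempty (fun a => qstar s a))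
    (hbell : ∀ s a, Jstar + qstar s a = r s a + ∑ s', p s a s' * vstar s')
    (Qstar : S → A → ℝ) (Vstar : S → ℝ)
    (hQ : ∀ s a, Qstar s a = r s a + γ * ∑ s', p s a s' * Vstar s')
    (hV : ∀ s, Vstar s = univ.sup' univ_nonempty (fun a => Qstar s a)) :
    univ.sup' univ_nonempty Vstar - univ.inf' univ_nonempty Vstar ≤
      2 * (univ.sup' univ_nonempty vstar - univ.inf' univ_nonempty vstar) := by
  have h1γ : (0:ℝ) < 1 - γ := by linarith
  set m : ℝ := univ.inf' univ_nonempty vstar with hm_def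
  set M : ℝ := univ.sup' univ_nonempty vstar with hM_def
  set J' : ℝ := Jstar / (1 - γ) with hJ'_def
  have hJ : Jstar + γ * J' = J' := by
    rw [hJ'_def, div_eq_mul_inv]
    have := mul_inv_cancel₀ h1γ.ne'
    linear_combination (-Jstar) * this
  have hmM : ∀ s, m ≤ vstar s ∧ vstar s ≤ M := fun s =>
    ⟨inf'_le _ (mem_univ s), le_sup' _ (mem_univ s)⟩
  -- bounds on r
  have hr_ub : ∀ s a, r s a ≤ Jstar + vstar s - ∑ s', p s a s' * vstar s' := by
    intro s a
    have hb := hbell s a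
    have hq : qstar s a ≤ vstar s := by
      rw [hv s]; exact le_sup' _ (mem_univ a)
    linarith
  have hsum_lb : ∀ s a, m ≤ ∑ s', p s a s' * vstar s' := by
    intro s a
    calc m = ∑ s', p s a s' * m := by rw [← sum_mul, hp1, one_mul]
    _ ≤ ∑ s', p s a s' * vstar s' :=
      sum_le_sum fun s' _ => mul_le_mul_of_nonneg_left (hmM s').1 (hp0 s a s')
  have hsum_ub : ∀ s a, ∑ s', p s a s' * vstar s' ≤ M := by
    intro s a
    calc ∑ s', p s a s' * vstar s' ≤ ∑ s', p s a s' * M :=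
      sum_le_sum fun s' _ => mul_le_mul_of_nonneg_left (hmM s').2 (hp0 s a s')
    _ = M := by rw [← sum_mul, hp1, one_mul]
  -- Upper bound : Vstar s ≤ vstar s - m + J'
  have hupper : ∀ s, Vstar s ≤ vstar s - m + J' := by
    set d : ℝ := univ.sup' univ_nonempty (fun s => Vstar s - (vstar s - m + J')) with hd_def
    have hVW : ∀ s, Vstar s ≤ vstar s - m + J' + d := by
      intro s
      have := le_sup' (fun s => Vstar s - (vstar s - m + J')) (mem_univ s)
      linarith
    have hd : d ≤ γ * d := by
      rw [hd_def]
      apply sup'_le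
      intro s _
      have hVs : Vstar s ≤ vstar s - m + J' + γ * d := by
        rw [hV s]
        apply sup'_le
        intro a _
        rw [hQ s a]
        have hsum : ∑ s', p s a s' * Vstar s' ≤
            ∑ s', p s a s' * vstar s' - m + J' + d := by
          calc ∑ s', p s a s' * Vstar s'
              ≤ ∑ s', p s a s' * (vstar s' - m + J' + d) :=
                sum_le_sum fun s' _ =>
                  mul_le_mul_of_nonneg_left (hVW s') (hp0 s a s')
          _ = ∑ s', (p s a s' * vstar s' + p s a s' * (-m + J' + d)) := by
                apply sum_congr rfl; intro s' _; ring
          _ = ∑ s', p s a s' * vstar s' + (∑ s', p s a s') * (-m + J' + d) := by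
                rw [sum_add_distrib, sum_mul]
          _ = ∑ s', p s a s' * vstar s' - m + J' + d := by rw [hp1]; ring
        have h1 := hr_ub s a
        have h2 := hsum_lb s a
        nlinarith [mul_le_mul_of_nonneg_left hsum hγ0]
      linarith
    have hd0 : d ≤ 0 := by nlinarith
    intro s
    have := le_sup' (fun s => Vstar s - (vstar s - m + J')) (mem_univ s)
    have : Vstar s - (vstar s - m + J') ≤ d := this
    linarith
  -- Lower bound : vstar s - M + J' ≤ Vstar s
  have hlower : ∀ s, vstar s - M + J' ≤ Vstar s := by
    set e : ℝ := univ.sup' univ_nonempty (fun s => (vstar s - M + J') - Vstar s) with he_def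
    have hVL : ∀ s, vstar s - M + J' - e ≤ Vstar s := by
      intro s
      have := le_sup' (fun s => (vstar s - M + J') - Vstar s) (mem_univ s)
      linarith
    have he : e ≤ γ * e := by
      rw [he_def]
      apply sup'_le
      intro s _
      have hVs : vstar s - M + J' - γ * e ≤ Vstar s := by
        obtain ⟨a, -, ha⟩ := exists_mem_eq_sup' univ_nonempty (fun a => qstar s a)
        have hva : vstar s = qstar s a := by rw [hv s, ha]
        have hQa : Qstar s a ≤ Vstar s := by
          rw [hV s]; exact le_sup' _ (mem_univ a)
        rw [hQ s a] at hQa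
        have hr_eq : r s a = Jstar + vstar s - ∑ s', p s a s' * vstar s' := by
          have hb := hbell s a
          linarith [hva]
        have hsum : ∑ s', p s a s' * vstar s' - M + J' - e ≤
            ∑ s', p s a s' * Vstar s' := by
          calc ∑ s', p s a s' * vstar s' - M + J' - e
              = ∑ s', p s a s' * vstar s' + (∑ s', p s a s') * (-M + J' - e) := by
                rw [hp1]; ring
          _ = ∑ s', (p s a s' * vstar s' + p s a s' * (-M + J' - e)) := by
                rw [sum_add_distrib, sum_mul]
          _ = ∑ s', p s a s' * (vstar s' - M + J' - e) := by
                apply sum_congr rfl; intro s' _; ring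
          _ ≤ ∑ s', p s a s' * Vstar s' :=
                sum_le_sum fun s' _ =>
                  mul_le_mul_of_nonneg_left (hVL s') (hp0 s a s')
        have h2 := hsum_ub s a
        nlinarith [mul_le_mul_of_nonneg_left hsum hγ0]
      linarith
    have he0 : e ≤ 0 := by nlinarith
    intro s
    have : (vstar s - M + J') - Vstar s ≤ e :=
      le_sup' (fun s => (vstar s - M + J') - Vstar s) (mem_univ s)
    linarith
  have hsupV : univ.sup' univ_nonempty Vstar ≤ M - m + J' :=
    sup'_le _ _ fun s _ => (hupper s).trans (by linarith [(hmM s).2])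
  have hinfV : m - M + J' ≤ univ.inf' univ_nonempty Vstar :=
    le_inf' _ _ fun s _ => le_trans (by linarith [(hmM s).1]) (hlower s)
  linarith
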